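/- Let u and v be nonnegative convex functions defined on the interval [a,b] with a < b, and assume u·v is integrable on [a,b]. Then (1/(b-a)) · ∫_a^b u(x)v(x) dx ≤ (1/2) · √(u(a)² + u(b)²) · √(v(a)² + v(b)²). -/

import Mathlib

/-- Cauchy–Schwarz in two variables, for nonnegative reals. -/
lemma cs_aux (A B C D : ℝ) (hA : 0 ≤ A) (hB : 0 ≤ B) (hC : 0 ≤ C) (hD : 0 ≤ D) :
    A * C + B * D ≤ Real.sqrt (A ^ 2 + B ^ 2) * Real.sqrt (C ^ 2 + D ^ 2) := by
  rw [← Real.sqrt_mul (by positivity)]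
  have h : (A * C + B * D) ^ 2 ≤ (A ^ 2 + B ^ 2) * (C ^ 2 + D ^ 2) := by
    nlinarith [sq_nonneg (A * D - B * C)]
  calc A * C + B * D = Real.sqrt ((A * C + B * D) ^ 2) :=
        (Real.sqrt_sq (by positivity)).symm
    _ ≤ Real.sqrt ((A ^ 2 + B ^ 2) * (C ^ 2 + D ^ 2)) := Real.sqrt_le_sqrt h

/-- Main Theorem (inequality (4)): for nonnegative convex functions `u, v` on `[a,b]`
with `u * v` integrable, the mean value of `u * v` is bounded by
`(1/2) * √(u a ^ 2 + u b ^ 2) * √(v a ^ 2 + v b ^ 2)`. -/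
theorem hadamard_like_product_bound (a b : ℝ) (hab : a < b) (u v : ℝ → ℝ)
    (hu0 : ∀ x ∈ Set.Icc a b, 0 ≤ u x) (hv0 : ∀ x ∈ Set.Icc a b, 0 ≤ v x)
    (hu : ConvexOn ℝ (Set.Icc a b) u) (hv : ConvexOn ℝ (Set.Icc a b) v)
    (hint : IntervalIntegrable (fun x => u x * v x) MeasureTheory.volume a b) :
    (1 / (b - a)) * ∫ x in a..b, u x * v x ≤
      (1 / 2) * Real.sqrt (u a ^ 2 + u b ^ 2) * Real.sqrt (v a ^ 2 + v b ^ 2) := by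
  have hba : (0:ℝ) < b - a := by linarith
  have hba' : b - a ≠ 0 := ne_of_gt hba
  set A := u a with hA
  set B := u b with hB
  set C := v a with hC
  set D := v b with hD
  have hA0 : 0 ≤ A := hu0 a ⟨le_refl a, le_of_lt hab⟩
  have hB0 : 0 ≤ B := hu0 b ⟨le_of_lt hab, le_refl b⟩
  have hC0 : 0 ≤ C := hv0 a ⟨le_refl a, le_of_lt hab⟩
  have hD0 : 0 ≤ D := hv0 b ⟨le_of_lt hab, le_refl b⟩
  set g : ℝ → ℝ := fun x =>
    ((b - x) * A + (x - a) * B) * ((b - x) * C + (x - a) * D) / (b - a) ^ 2 with hg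
  -- pointwise bound
  have hpt : ∀ x ∈ Set.Icc a b, u x * v x ≤ g x := by
    intro x hx
    obtain ⟨hax, hxb⟩ := hx
    set t := (b - x) / (b - a) with ht
    have ht0 : 0 ≤ t := div_nonneg (by linarith) (le_of_lt hba)
    have ht1 : t ≤ 1 := by
      rw [ht, div_le_one hba]; linarith
    have hts : t + (1 - t) = 1 := by ring
    have hxeq : t * a + (1 - t) * b = x := by
      rw [ht]; field_simp; ring
    have hux : u x ≤ t * A + (1 - t) * B := by
      have := hu.2 (Set.left_mem_Icc.2 (le_of_lt hab)) (Set.right_mem_Icc.2 (le_of_lt hab))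
        ht0 (by linarith) hts
      simpa [smul_eq_mul, hxeq] using this
    have hvx : v x ≤ t * C + (1 - t) * D := by
      have := hv.2 (Set.left_mem_Icc.2 (le_of_lt hab)) (Set.right_mem_Icc.2 (le_of_lt hab))
        ht0 (by linarith) hts
      simpa [smul_eq_mul, hxeq] using this
    have h1t : 1 - t = (x - a) / (b - a) := by rw [ht]; field_simp; ring
    have hrhs : (t * A + (1 - t) * B) * (t * C + (1 - t) * D) = g x := by
      rw [hg, ht, h1t]; field_simp
    calc u x * v x ≤ (t * A + (1 - t) * B) * (t * C + (1 - t) * D) :=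
          mul_le_mul hux hvx (hv0 x ⟨hax, hxb⟩) (add_nonneg (mul_nonneg ht0 hA0) (mul_nonneg (by linarith) hB0))
      _ = g x := hrhs
  -- g is continuous, hence integrable
  have hgint : IntervalIntegrable g MeasureTheory.volume a b := by
    apply Continuous.intervalIntegrable
    rw [hg]; fun_prop
  -- integral comparison
  have hmono : (∫ x in a..b, u x * v x) ≤ ∫ x in a..b, g x :=
    intervalIntegral.integral_mono_on (le_of_lt hab) hint hgint hpt
  -- compute ∫ g
  set c0 : ℝ := (b * A - a * B) * (b * C - a * D) with hc0
  set c1 : ℝ := (b * A - a * B) * (D - C) + (B - A) * (b * C - a * D) with hc1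
  set c2 : ℝ := (B - A) * (D - C) with hc2
  set F : ℝ → ℝ := fun x => (c0 * x + c1 * x ^ 2 / 2 + c2 * x ^ 3 / 3) / (b - a) ^ 2 with hF
  have hder : ∀ x ∈ Set.uIcc a b, HasDerivAt F (g x) x := by
    intro x _
    have h1 : HasDerivAt (fun x : ℝ => c0 * x + c1 * x ^ 2 / 2 + c2 * x ^ 3 / 3)
        (c0 * 1 + c1 * (2 * x ^ 1) / 2 + c2 * (3 * x ^ 2) / 3) x := by
      exact (((hasDerivAt_id x).const_mul c0).add
        (((hasDerivAt_pow 2 x).const_mul c1).div_const 2)).add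
        (((hasDerivAt_pow 3 x).const_mul c2).div_const 3)
    have h2 := h1.div_const ((b - a) ^ 2)
    refine h2.congr_deriv ?_
    rw [hg, hc0, hc1, hc2]
    field_simp
    ring
  have hInt : (∫ x in a..b, g x) = F b - F a :=
    intervalIntegral.integral_eq_sub_of_hasDerivAt hder hgint
  have hFval : F b - F a = (b - a) * (A * C / 3 + B * D / 3 + (A * D + B * C) / 6) := by
    rw [hF, hc0, hc1, hc2]
    field_simp
    ring
  -- Cauchy-Schwarz step
  have hS1 : A * C + B * D ≤ Real.sqrt (A ^ 2 + B ^ 2) * Real.sqrt (C ^ 2 + D ^ 2) :=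
    cs_aux A B C D hA0 hB0 hC0 hD0
  have hS2 : A * D + B * C ≤ Real.sqrt (A ^ 2 + B ^ 2) * Real.sqrt (C ^ 2 + D ^ 2) := by
    have := cs_aux A B D C hA0 hB0 hD0 hC0
    rwa [add_comm (D ^ 2) (C ^ 2)] at this
  have hfinal : A * C / 3 + B * D / 3 + (A * D + B * C) / 6 ≤
      1 / 2 * Real.sqrt (A ^ 2 + B ^ 2) * Real.sqrt (C ^ 2 + D ^ 2) := by
    nlinarith [hS1, hS2]
  calc (1 / (b - a)) * ∫ x in a..b, u x * v x
      ≤ (1 / (b - a)) * ∫ x in a..b, g x := by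
        apply mul_le_mul_of_nonneg_left hmono (by positivity)
    _ = A * C / 3 + B * D / 3 + (A * D + B * C) / 6 := by
        rw [hInt, hFval]; field_simp
    _ ≤ 1 / 2 * Real.sqrt (A ^ 2 + B ^ 2) * Real.sqrt (C ^ 2 + D ^ 2) := hfinal
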